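/- Let f be a family of functions assigning a nonnegative real number f(v) to each finitely-indexed family v of nonnegative reals, and let C_f be the associated convex roof coherence measure. Suppose that for every bipartite pure state |φ⟩_AB = Σ_{i,j} c_{ij} |i⟩_A|j⟩_B with Σ_{i,j} |c_{ij}|² = 1, one has C_f(|φ⟩_AB) ≥ Σ_{j : p_j > 0} p_j · C_f(|φ_j⟩_A) + Σ_{i : q_i > 0} q_i · C_f(|φ_i⟩_B), where p_j = Σ_i |c_{ij}|², |φ_j⟩_A = (1/√p_j) Σ_i c_{ij} |i⟩_A, q_i = Σ_j |c_{ij}|², and |φ_i⟩_B = (1/√q_i) Σ_j c_{ij} |j⟩_B. Then C_f is superadditive: for every bipartite density matrix ρ_AB, C_f(ρ_AB) ≥ C_f(ρ_A) + C_f(ρ_B), where ρ_A = Tr_B ρ_AB and ρ_B = Tr_A ρ_AB. -/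

import Mathlib

noncomputable section

open scoped ComplexOrder

/-- The outer product `|φ⟩⟨φ|` of a vector with itself. -/
def outer {ι : Type} (φ : ι → ℂ) : Matrix ι ι ℂ :=
  Matrix.of fun i i' => φ i * (starRingEnd ℂ) (φ i')

/-- A pure state: a unit vector in the fixed computational basis. -/
def IsUnitVec {ι : Type} [Fintype ι] (φ : ι → ℂ) : Prop :=
  ∑ i, ‖φ i‖ ^ 2 = 1

/-- A density matrix: positive semidefinite with trace one. -/
def IsDensity {ι : Type} [Fintype ι] (ρ : Matrix ι ι ℂ) : Prop :=
  ρ.PosSemidef ∧ ρ.trace = 1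

/-- The coherence measure on pure states: `C_f(|φ⟩) = f((|c_i|²)_i)`. -/
def pureCoh (f : (ι : Type) → [Fintype ι] → (ι → ℝ) → ℝ)
    {ι : Type} [Fintype ι] (φ : ι → ℂ) : ℝ :=
  f ι fun i => ‖φ i‖ ^ 2

/-- The convex roof extension of `C_f` to density matrices:
`C_f(ρ) = inf Σ_k p_k C_f(|φ_k⟩)` over finite ensembles `ρ = Σ_k p_k |φ_k⟩⟨φ_k|`. -/
def mixedCoh (f : (ι : Type) → [Fintype ι] → (ι → ℝ) → ℝ)
    {ι : Type} [Fintype ι] (ρ : Matrix ι ι ℂ) : ℝ :=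
  sInf { x : ℝ | ∃ (K : ℕ) (p : Fin K → ℝ) (φ : Fin K → ι → ℂ),
    (∀ k, 0 ≤ p k) ∧ (∑ k, p k) = 1 ∧ (∀ k, IsUnitVec (φ k)) ∧
    ρ = ∑ k, Complex.ofReal (p k) • outer (φ k) ∧
    x = ∑ k, p k * pureCoh f (φ k) }

-- the set
def cohSet (f : (ι : Type) → [Fintype ι] → (ι → ℝ) → ℝ)
    {ι : Type} [Fintype ι] (ρ : Matrix ι ι ℂ) : Set ℝ :=
  { x : ℝ | ∃ (K : ℕ) (p : Fin K → ℝ) (φ : Fin K → ι → ℂ),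
    (∀ k, 0 ≤ p k) ∧ (∑ k, p k) = 1 ∧ (∀ k, IsUnitVec (φ k)) ∧
    ρ = ∑ k, Complex.ofReal (p k) • outer (φ k) ∧
    x = ∑ k, p k * pureCoh f (φ k) }

lemma mixedCoh_eq (f : (ι : Type) → [Fintype ι] → (ι → ℝ) → ℝ)
    {ι : Type} [Fintype ι] (ρ : Matrix ι ι ℂ) :
    mixedCoh f ρ = sInf (cohSet f ρ) := rfl

lemma pureCoh_nonneg (f : (ι : Type) → [Fintype ι] → (ι → ℝ) → ℝ)
    (hf : ∀ (ι : Type) [Fintype ι] (v : ι → ℝ), (∀ i, 0 ≤ v i) → 0 ≤ f ι v)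
    {ι : Type} [Fintype ι] (φ : ι → ℂ) : 0 ≤ pureCoh f φ :=
  hf ι _ (fun i => sq_nonneg _)

lemma mem_cohSet (f : (ι : Type) → [Fintype ι] → (ι → ℝ) → ℝ)
    {ι κ : Type} [Fintype ι] [Fintype κ] {ρ : Matrix ι ι ℂ}
    (p : κ → ℝ) (φ : κ → ι → ℂ)
    (h0 : ∀ k, 0 ≤ p k) (h1 : (∑ k, p k) = 1) (hu : ∀ k, IsUnitVec (φ k))
    (hρ : ρ = ∑ k, Complex.ofReal (p k) • outer (φ k)) :
    (∑ k, p k * pureCoh f (φ k)) ∈ cohSet f ρ := by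
  obtain e := Fintype.equivFin κ
  refine ⟨Fintype.card κ, p ∘ e.symm, φ ∘ e.symm, fun k => h0 _, ?_, fun k => hu _, ?_, ?_⟩
  · exact (Equiv.sum_comp e.symm p).trans h1
  · rw [hρ]; exact (Equiv.sum_comp e.symm (fun k => Complex.ofReal (p k) • outer (φ k))).symm
  · exact (Equiv.sum_comp e.symm (fun k => p k * pureCoh f (φ k))).symm

lemma bddBelow_cohSet (f : (ι : Type) → [Fintype ι] → (ι → ℝ) → ℝ)
    (hf : ∀ (ι : Type) [Fintype ι] (v : ι → ℝ), (∀ i, 0 ≤ v i) → 0 ≤ f ι v)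
    {ι : Type} [Fintype ι] (ρ : Matrix ι ι ℂ) : BddBelow (cohSet f ρ) := by
  refine ⟨0, fun x hx => ?_⟩
  obtain ⟨K, p, φ, h0, -, -, -, hx⟩ := hx
  rw [hx]
  exact Finset.sum_nonneg fun k _ => mul_nonneg (h0 k) (pureCoh_nonneg f hf _)

lemma mixedCoh_le_ensemble (f : (ι : Type) → [Fintype ι] → (ι → ℝ) → ℝ)
    (hf : ∀ (ι : Type) [Fintype ι] (v : ι → ℝ), (∀ i, 0 ≤ v i) → 0 ≤ f ι v)
    {ι κ : Type} [Fintype ι] [Fintype κ] {ρ : Matrix ι ι ℂ}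
    (p : κ → ℝ) (φ : κ → ι → ℂ)
    (h0 : ∀ k, 0 ≤ p k) (h1 : (∑ k, p k) = 1) (hu : ∀ k, IsUnitVec (φ k))
    (hρ : ρ = ∑ k, Complex.ofReal (p k) • outer (φ k)) :
    mixedCoh f ρ ≤ ∑ k, p k * pureCoh f (φ k) := by
  rw [mixedCoh_eq]
  exact csInf_le (bddBelow_cohSet f hf ρ) (mem_cohSet f p φ h0 h1 hu hρ)

lemma mul_conj_eq (z : ℂ) : z * (starRingEnd ℂ) z = Complex.ofReal (‖z‖ ^ 2) := by
  rw [Complex.mul_conj, Complex.normSq_eq_norm_sq]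

lemma conj_mul_eq (z : ℂ) : (starRingEnd ℂ) z * z = Complex.ofReal (‖z‖ ^ 2) := by
  rw [mul_comm, mul_conj_eq]

-- spectral decomposition: existence of ensembles
lemma exists_ensemble {ι : Type} [Fintype ι] [DecidableEq ι] {ρ : Matrix ι ι ℂ}
    (hρ : IsDensity ρ) :
    ∃ (p : ι → ℝ) (φ : ι → ι → ℂ),
      (∀ k, 0 ≤ p k) ∧ (∑ k, p k) = 1 ∧ (∀ k, IsUnitVec (φ k)) ∧
      ρ = ∑ k, Complex.ofReal (p k) • outer (φ k) := by
  obtain ⟨hpsd, htr⟩ := hρ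
  have hH := hpsd.1
  set U : Matrix ι ι ℂ := (Matrix.IsHermitian.eigenvectorUnitary hH : Matrix ι ι ℂ) with hU
  set lam := hH.eigenvalues with hlam
  have hUU : star U * U = 1 := Unitary.coe_star_mul_self _
  have hcol : ∀ k, (∑ i, ‖U i k‖ ^ 2 : ℝ) = 1 := by
    intro k
    have h1 : (star U * U) k k = (1 : Matrix ι ι ℂ) k k := by rw [hUU]
    rw [Matrix.mul_apply, Matrix.one_apply_eq] at h1
    apply Complex.ofReal_injective
    push_cast
    rw [← h1]
    refine Finset.sum_congr rfl fun i _ => ?_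
    rw [Matrix.star_apply, Complex.star_def, conj_mul_eq]
    push_cast; ring
  have hdecomp : ρ = ∑ k, Complex.ofReal (lam k) • outer (fun i => U i k) := by
    ext i i'
    conv_lhs => rw [hH.spectral_theorem, Unitary.conjStarAlgAut_apply]
    rw [Matrix.mul_apply]
    simp only [Matrix.mul_diagonal, Matrix.star_apply, Complex.star_def, Matrix.sum_apply,
      Matrix.smul_apply, outer, Matrix.of_apply, smul_eq_mul, Function.comp_apply]
    refine Finset.sum_congr rfl fun k _ => ?_
    have hc : (RCLike.ofReal (lam k) : ℂ) = Complex.ofReal (lam k) := rfl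
    rw [hc]
    ring
  refine ⟨lam, fun k i => U i k, fun k => hpsd.eigenvalues_nonneg k, ?_, fun k => hcol k, hdecomp⟩
  have htr2 : Complex.ofReal (∑ k, lam k) = 1 := by
    rw [← htr, hdecomp]
    simp only [Matrix.trace, Matrix.diag, Matrix.sum_apply, Matrix.smul_apply, outer,
      Matrix.of_apply, smul_eq_mul]
    rw [Finset.sum_comm]
    push_cast
    refine Finset.sum_congr rfl fun k _ => ?_
    rw [← Finset.mul_sum]
    have h2 : (∑ i, U i k * (starRingEnd ℂ) (U i k)) = 1 := by
      have h3 : (∑ i, U i k * (starRingEnd ℂ) (U i k))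
          = ∑ i, Complex.ofReal (‖U i k‖ ^ 2) :=
        Finset.sum_congr rfl fun i _ => mul_conj_eq _
      rw [h3, ← Complex.ofReal_sum, hcol k, Complex.ofReal_one]
    rw [h2, mul_one]
  exact_mod_cast htr2

/-- if for every bipartite pure state `|φ⟩_AB = Σ_{ij} c_{ij}|i⟩|j⟩` one has
`C_f(|φ⟩_AB) ≥ Σ_{j : p_j > 0} p_j C_f(|φ_j⟩_A) + Σ_{i : q_i > 0} q_i C_f(|φ_i⟩_B)`, then
`C_f` is superadditive: `C_f(ρ_AB) ≥ C_f(ρ_A) + C_f(ρ_B)` for every bipartite density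
matrix. -/
theorem superadditivity_of_pure_condition_bipartite'
    (f : (ι : Type) → [Fintype ι] → (ι → ℝ) → ℝ)
    (hf : ∀ (ι : Type) [Fintype ι] (v : ι → ℝ), (∀ i, 0 ≤ v i) → 0 ≤ f ι v)
    (hyp : ∀ (dA dB : ℕ) (c : Fin dA → Fin dB → ℂ),
      (∑ i, ∑ j, ‖c i j‖ ^ 2) = 1 →
      pureCoh f (fun p : Fin dA × Fin dB => c p.1 p.2) ≥
        (∑ j : Fin dB,
          (if 0 < (∑ i, ‖c i j‖ ^ 2) then
            (∑ i, ‖c i j‖ ^ 2) *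
              pureCoh f (fun i : Fin dA =>
                c i j / Complex.ofReal (Real.sqrt (∑ i', ‖c i' j‖ ^ 2)))
          else 0))
        + ∑ i : Fin dA,
            (if 0 < (∑ j, ‖c i j‖ ^ 2) then
              (∑ j, ‖c i j‖ ^ 2) *
                pureCoh f (fun j : Fin dB =>
                  c i j / Complex.ofReal (Real.sqrt (∑ j', ‖c i j'‖ ^ 2)))
            else 0)) :
    ∀ (dA dB : ℕ) (ρ : Matrix (Fin dA × Fin dB) (Fin dA × Fin dB) ℂ),
      IsDensity ρ →
      mixedCoh f ρ ≥
        mixedCoh f (Matrix.of fun i i' : Fin dA => ∑ j, ρ (i, j) (i', j))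
        + mixedCoh f (Matrix.of fun j j' : Fin dB => ∑ i, ρ (i, j) (i, j')) := by
  intro dA dB ρ hρ
  have hne : Nonempty (Fin dA × Fin dB) := by
    by_contra h
    have hie : IsEmpty (Fin dA × Fin dB) := not_nonempty_iff.mp h
    have : ρ.trace = 0 := by simp [Matrix.trace]
    rw [hρ.2] at this
    exact one_ne_zero this
  obtain ⟨i0, j0⟩ := hne.some
  rw [ge_iff_le, mixedCoh_eq f ρ]
  refine le_csInf ?_ ?_
  · obtain ⟨p, φ, h0, h1, hu, hd⟩ := exists_ensemble ⟨hρ.1, hρ.2⟩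
    exact ⟨_, mem_cohSet f p φ h0 h1 hu hd⟩
  · rintro x ⟨K, p, φ, h0, h1, hu, hd, rfl⟩
    -- marginal weights
    set cA : Fin K → Fin dB → ℝ := fun k j => ∑ i, ‖φ k (i, j)‖ ^ 2 with hcA
    set cB : Fin K → Fin dA → ℝ := fun k i => ∑ j, ‖φ k (i, j)‖ ^ 2 with hcB
    have cA_nonneg : ∀ k j, 0 ≤ cA k j :=
      fun k j => Finset.sum_nonneg fun i _ => sq_nonneg _
    have cB_nonneg : ∀ k i, 0 ≤ cB k i :=
      fun k i => Finset.sum_nonneg fun j _ => sq_nonneg _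
    have hzA : ∀ k j, ¬ 0 < cA k j → ∀ i, φ k (i, j) = 0 := by
      intro k j hnot i
      have hc0 : cA k j = 0 := le_antisymm (not_lt.mp hnot) (cA_nonneg k j)
      have := (Finset.sum_eq_zero_iff_of_nonneg
        (fun i _ => sq_nonneg ‖φ k (i, j)‖)).mp hc0 i (Finset.mem_univ i)
      have : ‖φ k (i, j)‖ = 0 := by nlinarith [norm_nonneg (φ k (i, j))]
      exact norm_eq_zero.mp this
    have hzB : ∀ k i, ¬ 0 < cB k i → ∀ j, φ k (i, j) = 0 := by
      intro k i hnot j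
      have hc0 : cB k i = 0 := le_antisymm (not_lt.mp hnot) (cB_nonneg k i)
      have := (Finset.sum_eq_zero_iff_of_nonneg
        (fun j _ => sq_nonneg ‖φ k (i, j)‖)).mp hc0 j (Finset.mem_univ j)
      have : ‖φ k (i, j)‖ = 0 := by nlinarith [norm_nonneg (φ k (i, j))]
      exact norm_eq_zero.mp this
    have hsumA : ∀ k, ∑ j, cA k j = 1 := by
      intro k
      have hk := hu k
      unfold IsUnitVec at hk
      rw [Fintype.sum_prod_type] at hk
      rw [hcA, Finset.sum_comm]
      exact hk
    have hsumB : ∀ k, ∑ i, cB k i = 1 := by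
      intro k
      have hk := hu k
      unfold IsUnitVec at hk
      rw [Fintype.sum_prod_type] at hk
      exact hk
    -- the conditional pure states
    set ψA : (Fin K × Fin dB) → Fin dA → ℂ := fun kj i =>
      if 0 < cA kj.1 kj.2 then
        φ kj.1 (i, kj.2) / Complex.ofReal (Real.sqrt (cA kj.1 kj.2))
      else if i = i0 then 1 else 0 with hψA
    set ψB : (Fin K × Fin dA) → Fin dB → ℂ := fun ki j =>
      if 0 < cB ki.1 ki.2 then
        φ ki.1 (ki.2, j) / Complex.ofReal (Real.sqrt (cB ki.1 ki.2))
      else if j = j0 then 1 else 0 with hψB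
    set wA : (Fin K × Fin dB) → ℝ := fun kj => p kj.1 * cA kj.1 kj.2 with hwA
    set wB : (Fin K × Fin dA) → ℝ := fun ki => p ki.1 * cB ki.1 ki.2 with hwB
    have normsq_div_sqrt : ∀ (z : ℂ) (c : ℝ), 0 ≤ c →
        ‖z / Complex.ofReal (Real.sqrt c)‖ ^ 2 = ‖z‖ ^ 2 / c := by
      intro z c hc
      rw [norm_div, div_pow, Complex.norm_real, Real.norm_eq_abs,
        abs_of_nonneg (Real.sqrt_nonneg c), Real.sq_sqrt hc]
    -- unit vectors
    have huA : ∀ kj, IsUnitVec (ψA kj) := by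
      intro ⟨k, j⟩
      unfold IsUnitVec
      by_cases hpos : 0 < cA k j
      · simp only [hψA, if_pos hpos]
        rw [Finset.sum_congr rfl fun i _ => normsq_div_sqrt _ _ (cA_nonneg k j)]
        rw [← Finset.sum_div]
        exact div_self (ne_of_gt hpos)
      · simp only [hψA, if_neg hpos, apply_ite (fun z : ℂ => ‖z‖ ^ 2)]
        simp
    have huB : ∀ ki, IsUnitVec (ψB ki) := by
      intro ⟨k, i⟩
      unfold IsUnitVec
      by_cases hpos : 0 < cB k i
      · simp only [hψB, if_pos hpos]
        rw [Finset.sum_congr rfl fun j _ => normsq_div_sqrt _ _ (cB_nonneg k i)]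
        rw [← Finset.sum_div]
        exact div_self (ne_of_gt hpos)
      · simp only [hψB, if_neg hpos, apply_ite (fun z : ℂ => ‖z‖ ^ 2)]
        simp
    -- the key entrywise identity
    have termA : ∀ k j i i',
        Complex.ofReal (p k) * (φ k (i, j) * (starRingEnd ℂ) (φ k (i', j)))
          = Complex.ofReal (wA (k, j)) *
              (ψA (k, j) i * (starRingEnd ℂ) (ψA (k, j) i')) := by
      intro k j i i'
      by_cases hpos : 0 < cA k j
      · simp only [hψA, if_pos hpos, hwA]
        have hss : (Complex.ofReal (Real.sqrt (cA k j))) *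
            (Complex.ofReal (Real.sqrt (cA k j))) = Complex.ofReal (cA k j) := by
          rw [← Complex.ofReal_mul, Real.mul_self_sqrt (cA_nonneg k j)]
        have hc : (Complex.ofReal (cA k j)) ≠ 0 := Complex.ofReal_ne_zero.mpr (ne_of_gt hpos)
        rw [map_div₀, Complex.conj_ofReal, div_mul_div_comm, hss, Complex.ofReal_mul]
        field_simp
      · rw [hzA k j hpos i]
        simp only [hwA]
        have : cA k j = 0 := le_antisymm (not_lt.mp hpos) (cA_nonneg k j)
        rw [this]
        simp
    have termB : ∀ k i j j',
        Complex.ofReal (p k) * (φ k (i, j) * (starRingEnd ℂ) (φ k (i, j')))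
          = Complex.ofReal (wB (k, i)) *
              (ψB (k, i) j * (starRingEnd ℂ) (ψB (k, i) j')) := by
      intro k i j j'
      by_cases hpos : 0 < cB k i
      · simp only [hψB, if_pos hpos, hwB]
        have hss : (Complex.ofReal (Real.sqrt (cB k i))) *
            (Complex.ofReal (Real.sqrt (cB k i))) = Complex.ofReal (cB k i) := by
          rw [← Complex.ofReal_mul, Real.mul_self_sqrt (cB_nonneg k i)]
        have hc : (Complex.ofReal (cB k i)) ≠ 0 := Complex.ofReal_ne_zero.mpr (ne_of_gt hpos)
        rw [map_div₀, Complex.conj_ofReal, div_mul_div_comm, hss, Complex.ofReal_mul]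
        field_simp
      · rw [hzB k i hpos j]
        simp only [hwB]
        have : cB k i = 0 := le_antisymm (not_lt.mp hpos) (cB_nonneg k i)
        rw [this]
        simp
    -- the reduced matrices decompose
    have hdA : (Matrix.of fun i i' : Fin dA => ∑ j, ρ (i, j) (i', j))
        = ∑ kj : Fin K × Fin dB, Complex.ofReal (wA kj) • outer (ψA kj) := by
      ext i i'
      simp only [Matrix.of_apply, Matrix.sum_apply, Matrix.smul_apply, outer, smul_eq_mul]
      rw [Fintype.sum_prod_type]
      rw [Finset.sum_comm]
      refine Finset.sum_congr rfl fun j _ => ?_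
      rw [hd]
      simp only [Matrix.sum_apply, Matrix.smul_apply, outer, Matrix.of_apply, smul_eq_mul]
      exact Finset.sum_congr rfl fun k _ => termA k j i i'
    have hdB : (Matrix.of fun j j' : Fin dB => ∑ i, ρ (i, j) (i, j'))
        = ∑ ki : Fin K × Fin dA, Complex.ofReal (wB ki) • outer (ψB ki) := by
      ext j j'
      simp only [Matrix.of_apply, Matrix.sum_apply, Matrix.smul_apply, outer, smul_eq_mul]
      rw [Fintype.sum_prod_type]
      rw [Finset.sum_comm]
      refine Finset.sum_congr rfl fun i _ => ?_
      rw [hd]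
      simp only [Matrix.sum_apply, Matrix.smul_apply, outer, Matrix.of_apply, smul_eq_mul]
      exact Finset.sum_congr rfl fun k _ => termB k i j j'
    -- weights sum to one
    have hw1A : ∑ kj : Fin K × Fin dB, wA kj = 1 := by
      rw [Fintype.sum_prod_type]
      calc ∑ k, ∑ j, p k * cA k j = ∑ k, p k * ∑ j, cA k j := by
            refine Finset.sum_congr rfl fun k _ => ?_; rw [Finset.mul_sum]
        _ = ∑ k, p k := by
            refine Finset.sum_congr rfl fun k _ => ?_; rw [hsumA k, mul_one]
        _ = 1 := h1
    have hw1B : ∑ ki : Fin K × Fin dA, wB ki = 1 := by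
      rw [Fintype.sum_prod_type]
      calc ∑ k, ∑ i, p k * cB k i = ∑ k, p k * ∑ i, cB k i := by
            refine Finset.sum_congr rfl fun k _ => ?_; rw [Finset.mul_sum]
        _ = ∑ k, p k := by
            refine Finset.sum_congr rfl fun k _ => ?_; rw [hsumB k, mul_one]
        _ = 1 := h1
    -- the two ensemble bounds
    have hboundA : mixedCoh f (Matrix.of fun i i' : Fin dA => ∑ j, ρ (i, j) (i', j))
        ≤ ∑ kj : Fin K × Fin dB, wA kj * pureCoh f (ψA kj) :=
      mixedCoh_le_ensemble f hf wA ψA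
        (fun kj => mul_nonneg (h0 kj.1) (cA_nonneg kj.1 kj.2)) hw1A huA hdA
    have hboundB : mixedCoh f (Matrix.of fun j j' : Fin dB => ∑ i, ρ (i, j) (i, j'))
        ≤ ∑ ki : Fin K × Fin dA, wB ki * pureCoh f (ψB ki) :=
      mixedCoh_le_ensemble f hf wB ψB
        (fun ki => mul_nonneg (h0 ki.1) (cB_nonneg ki.1 ki.2)) hw1B huB hdB
    -- rewrite the ensemble values
    have hvalA : ∑ kj : Fin K × Fin dB, wA kj * pureCoh f (ψA kj)
        = ∑ k, p k * ∑ j, (if 0 < cA k j then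
            cA k j * pureCoh f (fun i : Fin dA =>
              φ k (i, j) / Complex.ofReal (Real.sqrt (cA k j))) else 0) := by
      rw [Fintype.sum_prod_type]
      refine Finset.sum_congr rfl fun k _ => ?_
      rw [Finset.mul_sum]
      refine Finset.sum_congr rfl fun j _ => ?_
      by_cases hpos : 0 < cA k j
      · rw [if_pos hpos, hwA]
        have : ψA (k, j) = fun i : Fin dA =>
            φ k (i, j) / Complex.ofReal (Real.sqrt (cA k j)) := by
          funext i; simp only [hψA, if_pos hpos]
        rw [this]; ring
      · rw [if_neg hpos]
        have : cA k j = 0 := le_antisymm (not_lt.mp hpos) (cA_nonneg k j)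
        simp [hwA, this]
    have hvalB : ∑ ki : Fin K × Fin dA, wB ki * pureCoh f (ψB ki)
        = ∑ k, p k * ∑ i, (if 0 < cB k i then
            cB k i * pureCoh f (fun j : Fin dB =>
              φ k (i, j) / Complex.ofReal (Real.sqrt (cB k i))) else 0) := by
      rw [Fintype.sum_prod_type]
      refine Finset.sum_congr rfl fun k _ => ?_
      rw [Finset.mul_sum]
      refine Finset.sum_congr rfl fun i _ => ?_
      by_cases hpos : 0 < cB k i
      · rw [if_pos hpos, hwB]
        have : ψB (k, i) = fun j : Fin dB =>
            φ k (i, j) / Complex.ofReal (Real.sqrt (cB k i)) := by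
          funext j; simp only [hψB, if_pos hpos]
        rw [this]; ring
      · rw [if_neg hpos]
        have : cB k i = 0 := le_antisymm (not_lt.mp hpos) (cB_nonneg k i)
        simp [hwB, this]
    -- per-state application of the hypothesis
    have hkey : ∀ k, pureCoh f (φ k) ≥
        (∑ j, (if 0 < cA k j then cA k j * pureCoh f (fun i : Fin dA =>
            φ k (i, j) / Complex.ofReal (Real.sqrt (cA k j))) else 0))
        + ∑ i, (if 0 < cB k i then cB k i * pureCoh f (fun j : Fin dB =>
            φ k (i, j) / Complex.ofReal (Real.sqrt (cB k i))) else 0) := by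
      intro k
      have hnorm : (∑ i, ∑ j, ‖φ k (i, j)‖ ^ 2) = 1 := by
        have hk := hu k
        unfold IsUnitVec at hk
        rw [Fintype.sum_prod_type] at hk
        exact hk
      have h := hyp dA dB (fun i j => φ k (i, j)) hnorm
      have heq : (fun pr : Fin dA × Fin dB => φ k (pr.1, pr.2)) = φ k := by
        funext pr; rw [Prod.mk.eta]
      rw [heq] at h
      exact h
    -- put it all together
    calc mixedCoh f (Matrix.of fun i i' : Fin dA => ∑ j, ρ (i, j) (i', j))
          + mixedCoh f (Matrix.of fun j j' : Fin dB => ∑ i, ρ (i, j) (i, j'))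
        ≤ (∑ kj : Fin K × Fin dB, wA kj * pureCoh f (ψA kj))
          + ∑ ki : Fin K × Fin dA, wB ki * pureCoh f (ψB ki) :=
          add_le_add hboundA hboundB
      _ = ∑ k, p k * ((∑ j, (if 0 < cA k j then cA k j * pureCoh f (fun i : Fin dA =>
              φ k (i, j) / Complex.ofReal (Real.sqrt (cA k j))) else 0))
            + ∑ i, (if 0 < cB k i then cB k i * pureCoh f (fun j : Fin dB =>
              φ k (i, j) / Complex.ofReal (Real.sqrt (cB k i))) else 0)) := by
          rw [hvalA, hvalB, ← Finset.sum_add_distrib]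
          refine Finset.sum_congr rfl fun k _ => ?_
          ring
      _ ≤ ∑ k, p k * pureCoh f (φ k) := by
          refine Finset.sum_le_sum fun k _ => ?_
          exact mul_le_mul_of_nonneg_left (hkey k) (h0 k)


end
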